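/- Fix n, d, s ∈ ℕ with n ≥ 1, s even, 2 ≤ s ≤ d, and fix ε > 0 and σ > 0. Assume 2n·log 2 + log 2 ≤ (1/2) · log(C(d,s) · C(s, s/2)). Then for every measurable estimator β̂ : ℝ^{n×d} × ℝ^n → ℝ^d, under the joint law in which β* is uniform on F₃(d,s,ε), X ∈ ℝ^{n×d} has i.i.d. entries gaussianReal 0 (1/n), e ∈ ℝ^n has i.i.d. entries gaussianReal 0 σ², and β*, X, e are mutually independent, the probability that β̂(X, sign(X·β* + e)) ≠ β* is at least 1/2. -/

import Mathlib

open MeasureTheory ProbabilityTheory Real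
open scoped ENNReal NNReal

/-- The sign function, with `sign x = 1` for `x ≥ 0` and `-1` otherwise. -/
noncomputable def signFun (x : ℝ) : ℝ := if 0 ≤ x then 1 else -1

/-- The restricted ensemble `F₃(d,s,ε)` for one-bit compressed sensing. -/
noncomputable def F3 (d s : ℕ) (ε : ℝ) : Set (Fin d → ℝ) :=
  {β | ∃ A B : Finset (Fin d), Disjoint A B ∧ A.card = s / 2 ∧ B.card = s / 2 ∧
    (∀ i ∈ A, β i = -ε) ∧ (∀ i ∈ B, β i = Real.sqrt (2 / s) + ε) ∧
    ∀ i ∉ A ∪ B, β i = 0}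

namespace OneBitAux

variable (d s : ℕ) (ε : ℝ)

/-- Parameter set: pairs (U, A) with |U| = s, A ⊆ U, |A| = s/2. -/
noncomputable def P : Finset (Σ _ : Finset (Fin d), Finset (Fin d)) :=
  ((Finset.univ : Finset (Fin d)).powersetCard s).sigma (fun U => U.powersetCard (s / 2))

/-- The vector associated to a pair (U, A). -/
noncomputable def fvec (p : Σ _ : Finset (Fin d), Finset (Fin d)) : Fin d → ℝ :=
  fun i => if i ∈ p.2 then -ε else if i ∈ p.1 then Real.sqrt (2 / (s : ℝ)) + ε else 0

lemma card_P : (P d s).card = d.choose s * s.choose (s / 2) := by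
  rw [P, Finset.card_sigma]
  rw [Finset.sum_congr rfl (fun U hU => ?_), Finset.sum_const, Finset.card_powersetCard,
    Finset.card_univ, Fintype.card_fin, smul_eq_mul]
  rw [Finset.card_powersetCard, (Finset.mem_powersetCard.mp hU).2]

variable {d s ε}

lemma cpos (hε : 0 < ε) : 0 < Real.sqrt (2 / (s : ℝ)) + ε :=
  add_pos_of_nonneg_of_pos (Real.sqrt_nonneg _) hε

lemma mem_snd_iff (hε : 0 < ε) (p : Σ _ : Finset (Fin d), Finset (Fin d)) (i : Fin d) :
    i ∈ p.2 ↔ fvec d s ε p i = -ε := by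
  have hc := cpos (s := s) hε
  unfold fvec
  constructor
  · intro h; simp [h]
  · intro h
    by_contra hi
    rw [if_neg hi] at h
    split at h <;> nlinarith

lemma mem_fst_iff (hε : 0 < ε) (p : Σ _ : Finset (Fin d), Finset (Fin d))
    (hsub : p.2 ⊆ p.1) (i : Fin d) : i ∈ p.1 ↔ fvec d s ε p i ≠ 0 := by
  have hc := cpos (s := s) hε
  unfold fvec
  constructor
  · intro h
    by_cases hi : i ∈ p.2
    · rw [if_pos hi]; intro h'; nlinarith
    · rw [if_neg hi, if_pos h]; intro h'; nlinarith
  · intro h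
    by_contra hi
    rw [if_neg (fun hA => hi (hsub hA)), if_neg hi] at h
    exact h rfl

lemma injOn_fvec (hε : 0 < ε) : Set.InjOn (fvec d s ε) (P d s : Set _) := by
  rintro ⟨U, A⟩ hp ⟨V, B⟩ hq h
  simp only [Finset.mem_coe, P, Finset.mem_sigma, Finset.mem_powersetCard] at hp hq
  have hAB : A = B := by
    ext i
    rw [mem_snd_iff hε ⟨U, A⟩ i, mem_snd_iff hε ⟨V, B⟩ i, h]
  have hUV : U = V := by
    ext i
    rw [mem_fst_iff hε ⟨U, A⟩ hp.2.1 i, mem_fst_iff hε ⟨V, B⟩ hq.2.1 i, h]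
  subst hAB; subst hUV; rfl

lemma F3_eq (heven : Even s) (hε : 0 < ε) :
    F3 d s ε = ↑((P d s).image (fvec d s ε)) := by
  obtain ⟨k, hk⟩ := heven
  have hk2 : s / 2 = k := by omega
  ext β
  simp only [F3, Set.mem_setOf_eq, Finset.coe_image, Set.mem_image, Finset.mem_coe]
  constructor
  · rintro ⟨A, B, hdisj, hA, hB, hvA, hvB, hv0⟩
    refine ⟨⟨A ∪ B, A⟩, ?_, ?_⟩
    · simp only [P, Finset.mem_sigma, Finset.mem_powersetCard]
      refine ⟨⟨Finset.subset_univ _, ?_⟩, Finset.subset_union_left, hA⟩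
      rw [Finset.card_union_of_disjoint hdisj, hA, hB]; omega
    · funext i
      unfold fvec
      by_cases hiA : i ∈ A
      · rw [if_pos hiA]; exact (hvA i hiA).symm
      · rw [if_neg hiA]
        by_cases hiB : i ∈ B
        · rw [if_pos (Finset.mem_union.mpr (Or.inr hiB))]; exact (hvB i hiB).symm
        · rw [if_neg (by simp [hiA, hiB])]
          exact (hv0 i (by simp [hiA, hiB])).symm
  · rintro ⟨⟨U, A⟩, hp, rfl⟩
    simp only [P, Finset.mem_sigma, Finset.mem_powersetCard] at hp
    obtain ⟨⟨-, hU⟩, hAU, hA⟩ := hp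
    refine ⟨A, U \ A, Finset.disjoint_sdiff, hA, ?_, ?_, ?_, ?_⟩
    · rw [Finset.card_sdiff_of_subset hAU, hU, hA]; omega
    · intro i hi; unfold fvec; rw [if_pos hi]
    · intro i hi
      rw [Finset.mem_sdiff] at hi
      unfold fvec; rw [if_neg hi.2, if_pos hi.1]
    · intro i hi
      rw [Finset.union_sdiff_of_subset hAU] at hi
      unfold fvec; rw [if_neg (fun h => hi (hAU h)), if_neg hi]

end OneBitAux

open OneBitAux

theorem onebit_cs_exact_recovery_lower_bound
    (n d s : ℕ) (hn : 1 ≤ n) (heven : Even s) (hs2 : 2 ≤ s) (hsd : s ≤ d)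
    (ε σ : ℝ) (hε : 0 < ε) (hσ : 0 < σ)
    (hbound : 2 * (n : ℝ) * Real.log 2 + Real.log 2 ≤
      (1 / 2) * Real.log ((d.choose s : ℝ) * (s.choose (s / 2) : ℝ)))
    (est : (Fin n → Fin d → ℝ) × (Fin n → ℝ) → (Fin d → ℝ))
    (hest : Measurable est) :
    (1 / 2 : ℝ≥0∞) ≤
      ((uniformOn (F3 d s ε)).prod
          ((Measure.pi fun _ : Fin n => Measure.pi fun _ : Fin d =>
              gaussianReal 0 (1 / (n : ℝ≥0))).prod
            (Measure.pi fun _ : Fin n => gaussianReal 0 ⟨σ ^ 2, sq_nonneg σ⟩)))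
        {ω : (Fin d → ℝ) × ((Fin n → Fin d → ℝ) × (Fin n → ℝ)) |
          est (ω.2.1, fun i => signFun ((∑ j, ω.2.1 i j * ω.1 j) + ω.2.2 i)) ≠ ω.1} := by
  classical
  set N : ℕ := d.choose s * s.choose (s / 2) with hN
  -- the ensemble as a Finset
  have hF3 : F3 d s ε = ↑((P d s).image (fvec d s ε)) := F3_eq heven hε
  have hfin : (F3 d s ε).Finite := by rw [hF3]; exact Finset.finite_toSet _
  have hcardF : ((P d s).image (fvec d s ε)).card = N := by
    rw [Finset.card_image_of_injOn (injOn_fvec hε), card_P]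
  have hNpos : 0 < N :=
    Nat.mul_pos (Nat.choose_pos hsd) (Nat.choose_pos (Nat.div_le_self s 2))
  have hne : (F3 d s ε).Nonempty := by
    rw [hF3]
    have hpos : 0 < ((P d s).image (fvec d s ε)).card := by rw [hcardF]; exact hNpos
    exact (Finset.coe_nonempty).mpr (Finset.card_pos.mp hpos)
  -- lower bound on N
  have hNge : 2 ^ (4 * n + 2) ≤ N := by
    have h2 : (0:ℝ) < Real.log 2 := Real.log_pos (by norm_num)
    have hNR : ((4 * n + 2 : ℕ) : ℝ) * Real.log 2 ≤ Real.log N := by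
      rw [hN]
      push_cast
      push_cast at hbound
      linarith
    rw [← Real.log_pow] at hNR
    have := (Real.log_le_log_iff (by positivity) (by exact_mod_cast hNpos)).mp hNR
    exact_mod_cast this
  -- probability measures
  have hμprob : IsProbabilityMeasure (uniformOn (F3 d s ε)) :=
    uniformOn_isProbabilityMeasure hfin hne
  set ν := ((Measure.pi fun _ : Fin n => Measure.pi fun _ : Fin d =>
              gaussianReal 0 (1 / (n : ℝ≥0))).prod
            (Measure.pi fun _ : Fin n => gaussianReal 0 ⟨σ ^ 2, sq_nonneg σ⟩)) with hν
  have hνprob : IsProbabilityMeasure ν := by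
    rw [hν]
    have := @Measure.pi.instIsProbabilityMeasure _ _ _ _ (fun _ : Fin n => gaussianReal 0 ⟨σ ^ 2, sq_nonneg σ⟩) (fun _ => instIsProbabilityMeasureGaussianReal 0 _); infer_instance
  -- measurability of the event
  have hFmeas : Measurable (fun ω : (Fin d → ℝ) × ((Fin n → Fin d → ℝ) × (Fin n → ℝ)) =>
      est (ω.2.1, fun i => signFun ((∑ j, ω.2.1 i j * ω.1 j) + ω.2.2 i))) := by
    apply hest.comp
    refine Measurable.prod (by fun_prop) ?_
    refine measurable_pi_lambda _ (fun i => ?_)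
    have hsign : Measurable signFun := by
      unfold signFun
      exact Measurable.ite measurableSet_Ici measurable_const measurable_const
    apply hsign.comp
    apply Measurable.add ?_ (by fun_prop)
    apply Finset.measurable_sum
    intro j _
    fun_prop
  have hEm : MeasurableSet {ω : (Fin d → ℝ) × ((Fin n → Fin d → ℝ) × (Fin n → ℝ)) |
      est (ω.2.1, fun i => signFun ((∑ j, ω.2.1 i j * ω.1 j) + ω.2.2 i)) ≠ ω.1} := by
    apply MeasurableSet.compl
    exact measurableSet_eq_fun hFmeas measurable_fst
  -- slice bound: for each fixed (x, e), the correct-recovery set has uniform measure ≤ 1/2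
  have hslice : ∀ y : (Fin n → Fin d → ℝ) × (Fin n → ℝ),
      uniformOn (F3 d s ε)
        {β : Fin d → ℝ | est (y.1, fun i => signFun ((∑ j, y.1 i j * β j) + y.2 i)) = β}
        ≤ 1 / 2 := by
    intro y
    set g : (Fin d → ℝ) → (Fin n → ℝ) :=
      fun β i => signFun ((∑ j, y.1 i j * β j) + y.2 i) with hg
    set t : Set (Fin d → ℝ) := {β | est (y.1, g β) = β} with ht
    have hfint : (F3 d s ε ∩ t).Finite := hfin.inter_of_left _
    -- the correct set injects into sign patterns
    have hcard_t : hfint.toFinset.card ≤ 2 ^ n := by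
      have : hfint.toFinset.card ≤ (Fintype.piFinset fun _ : Fin n =>
          ({1, -1} : Finset ℝ)).card := by
        apply Finset.card_le_card_of_injOn g
        · intro β _
          rw [Finset.mem_coe, Fintype.mem_piFinset]
          intro i
          simp only [Finset.mem_insert, Finset.mem_singleton, g, signFun]
          split <;> simp
        · intro β hβ β' hβ' hgg
          simp only [Finset.mem_coe, Set.Finite.mem_toFinset, ht, Set.mem_inter_iff,
            Set.mem_setOf_eq] at hβ hβ'
          have h1 : est (y.1, g β) = β := hβ.2
          have h2 : est (y.1, g β') = β' := hβ'.2
          rw [← h1, ← h2, hgg]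
      rwa [Fintype.card_piFinset, Finset.prod_const, Finset.card_univ, Fintype.card_fin,
        show ({1, -1} : Finset ℝ).card = 2 by norm_num] at this
    -- compute the uniform measure
    rw [uniformOn, cond_apply hfin.measurableSet]
    have hcs : Measure.count (F3 d s ε) = (N : ℝ≥0∞) := by
      rw [hF3, Measure.count_apply_finset, hcardF]
    have hct : Measure.count (F3 d s ε ∩ t) ≤ ((2 : ℝ≥0∞)) ^ n := by
      rw [Measure.count_apply_finite _ hfint]
      exact_mod_cast (Nat.cast_le (α := ℝ≥0∞)).mpr hcard_t
    calc (Measure.count (F3 d s ε))⁻¹ * Measure.count (F3 d s ε ∩ t)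
        ≤ ((2 : ℝ≥0∞) ^ (4 * n + 2))⁻¹ * 2 ^ n := by
          apply mul_le_mul' _ hct
          rw [hcs, ENNReal.inv_le_inv]
          exact_mod_cast (Nat.cast_le (α := ℝ≥0∞)).mpr hNge
      _ ≤ 1 / 2 := by
          rw [show 4 * n + 2 = (3 * n + 2) + n by ring, pow_add,
            ENNReal.mul_inv (by simp) (by simp), mul_assoc,
            ENNReal.inv_mul_cancel (by simp) (by simp), mul_one, one_div,
            ENNReal.inv_le_inv]
          calc (2 : ℝ≥0∞) = 2 ^ 1 := (pow_one 2).symm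
            _ ≤ 2 ^ (3 * n + 2) := pow_le_pow_right₀ (by norm_num) (by omega)
  -- Fubini and conclusion
  set E := {ω : (Fin d → ℝ) × ((Fin n → Fin d → ℝ) × (Fin n → ℝ)) |
      est (ω.2.1, fun i => signFun ((∑ j, ω.2.1 i j * ω.1 j) + ω.2.2 i)) ≠ ω.1} with hE
  have hprod : IsProbabilityMeasure ((uniformOn (F3 d s ε)).prod ν) := by infer_instance
  have hcompl : ((uniformOn (F3 d s ε)).prod ν) Eᶜ ≤ 1 / 2 := by
    rw [Measure.prod_apply_symm hEm.compl]
    calc ∫⁻ y, uniformOn (F3 d s ε) ((fun x => (x, y)) ⁻¹' Eᶜ) ∂ν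
        ≤ ∫⁻ _, 1 / 2 ∂ν := by
          apply lintegral_mono
          intro y
          show uniformOn (F3 d s ε) ((fun x => (x, y)) ⁻¹' Eᶜ) ≤ 1 / 2
          have : ((fun x => (x, y)) ⁻¹' Eᶜ) =
              {β : Fin d → ℝ | est (y.1, fun i => signFun ((∑ j, y.1 i j * β j) + y.2 i)) = β} := by
            ext β
            simp [hE, Set.preimage, Set.mem_compl_iff]
          rw [this]
          exact hslice y
      _ = 1 / 2 := by rw [lintegral_const, measure_univ, mul_one]
  have hsum := measure_add_measure_compl (μ := (uniformOn (F3 d s ε)).prod ν) hEm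
  rw [← ENNReal.add_le_add_iff_right (show (1/2 : ℝ≥0∞) ≠ ∞ by norm_num)]
  calc (1 / 2 : ℝ≥0∞) + 1 / 2 = 1 := ENNReal.add_halves 1
    _ = ((uniformOn (F3 d s ε)).prod ν) E + ((uniformOn (F3 d s ε)).prod ν) Eᶜ := by
        rw [hsum, measure_univ]
    _ ≤ ((uniformOn (F3 d s ε)).prod ν) E + 1 / 2 := add_le_add_right hcompl _
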